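/- arXiv:2002.04010 — 3 statements merged into one kernel-verified Lean document; each statement's English description precedes it below -/
import Mathlib

section
/- Per-neuron weight movement bound (first part of Lemma A.3, full-training case): Assume |σ'(t)| ≤ C₁ for all t and ‖x_i‖ = 1 for all i. Let W_t be a solution of the full-training gradient flow and suppose there are R₀, c > 0 such that ‖g_t‖ ≤ R₀ e^{−ct} for all t ≥ 0. Then for every neuron r ∈ {1, …, m} and every t ≥ 0: ‖w_{r,t} − w_{r,0}‖ ≤ (η₀ C₁ √n R₀ / c)(1 − e^{−ct}) · m^{−1/2}. -/
open scoped BigOperators RealInnerProductSpace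
noncomputable section

/-- Weight space: `m` neurons, each in `ℝ^d`, with the Frobenius (ℓ²-of-ℓ²) norm. -/
abbrev Wts (d m : ℕ) : Type := PiLp 2 (fun _ : Fin m => EuclideanSpace ℝ (Fin d))

/-- Two-layer network `f_W(x) = m^{-1/2} ∑_r a_r σ(⟨w_r, x⟩)`. -/
def net (d m : ℕ) (σ : ℝ → ℝ) (a : Fin m → ℝ) (W : Wts d m)
    (x : EuclideanSpace ℝ (Fin d)) : ℝ :=
  (Real.sqrt m)⁻¹ * ∑ r : Fin m, a r * σ ⟪W r, x⟫

/-- The `k`-th order Taylorized model of the network around `W₀`. -/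
def netT (d m k : ℕ) (σ : ℝ → ℝ) (a : Fin m → ℝ) (W₀ : Wts d m) (W : Wts d m)
    (x : EuclideanSpace ℝ (Fin d)) : ℝ :=
  (Real.sqrt m)⁻¹ * ∑ r : Fin m, a r *
    ∑ j ∈ Finset.range (k + 1),
      (iteratedDeriv j σ ⟪W₀ r, x⟫ / (j.factorial : ℝ)) * ⟪W r - W₀ r, x⟫ ^ j

/-- Residual vector `g(W) ∈ ℝⁿ`, `g(W)ᵢ = f_W(xᵢ) - yᵢ`. -/
def resid (d m n : ℕ) (σ : ℝ → ℝ) (a : Fin m → ℝ)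
    (X : Fin n → EuclideanSpace ℝ (Fin d)) (y : EuclideanSpace ℝ (Fin n))
    (W : Wts d m) : EuclideanSpace ℝ (Fin n) :=
  WithLp.toLp 2 (fun i => net d m σ a W (X i) - y i)

/-- Residual vector `g⁽ᵏ⁾(W) ∈ ℝⁿ` of the Taylorized model. -/
def residT (d m n k : ℕ) (σ : ℝ → ℝ) (a : Fin m → ℝ) (W₀ : Wts d m)
    (X : Fin n → EuclideanSpace ℝ (Fin d)) (y : EuclideanSpace ℝ (Fin n))
    (W : Wts d m) : EuclideanSpace ℝ (Fin n) :=
  WithLp.toLp 2 (fun i => netT d m k σ a W₀ W (X i) - y i)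

/-- Squared loss `L(W) = ½‖g(W)‖²`. -/
def loss (d m n : ℕ) (σ : ℝ → ℝ) (a : Fin m → ℝ)
    (X : Fin n → EuclideanSpace ℝ (Fin d)) (y : EuclideanSpace ℝ (Fin n))
    (W : Wts d m) : ℝ :=
  (1 / 2) * ‖resid d m n σ a X y W‖ ^ 2

/-- Squared loss `L⁽ᵏ⁾(W) = ½‖g⁽ᵏ⁾(W)‖²` of the Taylorized model. -/
def lossT (d m n k : ℕ) (σ : ℝ → ℝ) (a : Fin m → ℝ) (W₀ : Wts d m)
    (X : Fin n → EuclideanSpace ℝ (Fin d)) (y : EuclideanSpace ℝ (Fin n))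
    (W : Wts d m) : ℝ :=
  (1 / 2) * ‖residT d m n k σ a W₀ X y W‖ ^ 2

/-- `i`-th row of the Jacobian `J(W)`: the gradient of `W ↦ f_W(xᵢ)`.
Its `r`-th block `Jrow ... W i r` is the gradient `∇_{w_r} f_W(xᵢ)`. -/
def Jrow (d m n : ℕ) (σ : ℝ → ℝ) (a : Fin m → ℝ)
    (X : Fin n → EuclideanSpace ℝ (Fin d)) (W : Wts d m) (i : Fin n) : Wts d m :=
  gradient (fun V => net d m σ a V (X i)) W

/-- `i`-th row of the Taylorized Jacobian `J⁽ᵏ⁾(W)`. -/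
def JrowT (d m n k : ℕ) (σ : ℝ → ℝ) (a : Fin m → ℝ) (W₀ : Wts d m)
    (X : Fin n → EuclideanSpace ℝ (Fin d)) (W : Wts d m) (i : Fin n) : Wts d m :=
  gradient (fun V => netT d m k σ a W₀ V (X i)) W


section AuxPerNeuron

/-- Projection onto the `r`-th block of the weight space. -/
def projW (d m : ℕ) (r : Fin m) : Wts d m →L[ℝ] EuclideanSpace ℝ (Fin d) :=
  PiLp.proj 2 (fun _ : Fin m => EuclideanSpace ℝ (Fin d)) r

/-- Explicit Fréchet derivative of `V ↦ f_V(x)`. -/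
def Dnet (d m : ℕ) (σ : ℝ → ℝ) (a : Fin m → ℝ) (x : EuclideanSpace ℝ (Fin d))
    (V : Wts d m) : Wts d m →L[ℝ] ℝ :=
  (Real.sqrt m)⁻¹ • ∑ r : Fin m,
    a r • (deriv σ ⟪V r, x⟫ • ((innerSL ℝ x).comp (projW d m r)))

lemma net_hasFDerivAt (d m : ℕ) (σ : ℝ → ℝ) (hσ : ContDiff ℝ 1 σ) (a : Fin m → ℝ)
    (x : EuclideanSpace ℝ (Fin d)) (V : Wts d m) :
    HasFDerivAt (fun V => net d m σ a V x) (Dnet d m σ a x V) V := by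
  have hr : ∀ r : Fin m, HasFDerivAt (fun V : Wts d m => σ ⟪V r, x⟫)
      ((deriv σ ⟪V r, x⟫) • ((innerSL ℝ x).comp (projW d m r))) V := by
    intro r
    have hlin : HasFDerivAt (fun V : Wts d m => ⟪V r, x⟫)
        ((innerSL ℝ x).comp (projW d m r)) V := by
      have h : (fun V : Wts d m => ⟪V r, x⟫)
          = fun V => ((innerSL ℝ x).comp (projW d m r)) V := by
        funext u; simp [projW, mul_comm, real_inner_comm]
      rw [h]
      exact ContinuousLinearMap.hasFDerivAt _
    exact ((hσ.differentiable one_ne_zero _).hasDerivAt).comp_hasFDerivAt _ hlin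
  have hsum : HasFDerivAt (fun V : Wts d m => ∑ r : Fin m, a r * σ ⟪V r, x⟫)
      (∑ r : Fin m, a r • (deriv σ ⟪V r, x⟫ • ((innerSL ℝ x).comp (projW d m r)))) V :=
    HasFDerivAt.fun_sum fun r _ => (hr r).const_mul (a r)
  exact hsum.const_mul _

/-- Explicit gradient of the loss. -/
def gradLoss (d m n : ℕ) (σ : ℝ → ℝ) (a : Fin m → ℝ)
    (X : Fin n → EuclideanSpace ℝ (Fin d)) (y : EuclideanSpace ℝ (Fin n))
    (V : Wts d m) : Wts d m := WithLp.toLp 2 (fun r =>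
  ∑ i : Fin n, (resid d m n σ a X y V i
      * ((Real.sqrt m)⁻¹ * (a r * deriv σ ⟪V r, X i⟫))) • X i)

lemma loss_hasGradientAt (d m n : ℕ) (σ : ℝ → ℝ) (hσ : ContDiff ℝ 1 σ) (a : Fin m → ℝ)
    (X : Fin n → EuclideanSpace ℝ (Fin d)) (y : EuclideanSpace ℝ (Fin n)) (V : Wts d m) :
    HasGradientAt (loss d m n σ a X y) (gradLoss d m n σ a X y V) V := by
  have hre : loss d m n σ a X y
      = fun V => (1/2) * ∑ i : Fin n, (net d m σ a V (X i) - y i)^2 := by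
    funext V
    simp [loss, PiLp.norm_sq_eq_of_L2, resid, sq_abs]
  have hre2 : loss d m n σ a X y
      = fun V => (1/2) * ∑ i : Fin n,
          (net d m σ a V (X i) - y i) * (net d m σ a V (X i) - y i) := by
    rw [hre]; funext V; simp [pow_two]
  have hF : HasFDerivAt (loss d m n σ a X y)
      ((1/2 : ℝ) • ∑ i : Fin n,
        ((net d m σ a V (X i) - y i) • Dnet d m σ a (X i) V
          + (net d m σ a V (X i) - y i) • Dnet d m σ a (X i) V)) V := by
    rw [hre2]
    exact (HasFDerivAt.fun_sum fun i _ =>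
      (((net_hasFDerivAt d m σ hσ a (X i) V).sub_const (y i)).mul
        ((net_hasFDerivAt d m σ hσ a (X i) V).sub_const (y i)))).const_mul _
  rw [hasGradientAt_iff_hasFDerivAt]
  refine hF.congr_fderiv ?_
  ext v
  simp only [InnerProductSpace.toDual_apply_apply, PiLp.inner_apply, gradLoss,
    ContinuousLinearMap.smul_apply, ContinuousLinearMap.sum_apply, Dnet,
    ContinuousLinearMap.add_apply, ContinuousLinearMap.coe_comp', Function.comp_apply,
    innerSL_apply_apply, projW, PiLp.proj_apply, sum_inner, real_inner_smul_left, smul_eq_mul,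
    resid, RCLike.inner_apply, conj_trivial, PiLp.smul_apply]
  rw [Finset.sum_comm]
  rw [Finset.mul_sum]
  refine Finset.sum_congr rfl fun i _ => ?_
  have h2 : ∀ b : ℝ, 1/2 * (b + b) = b := fun b => by ring
  rw [h2]
  simp only [Finset.mul_sum]
  refine Finset.sum_congr rfl fun r _ => ?_
  refine Finset.sum_congr rfl fun j _ => ?_
  ring

lemma l1_le_sqrt_l2 (n : ℕ) (g : EuclideanSpace ℝ (Fin n)) :
    ∑ i : Fin n, |g i| ≤ Real.sqrt n * ‖g‖ := by
  let u : EuclideanSpace ℝ (Fin n) := WithLp.toLp 2 (fun _ => (1:ℝ))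
  let w : EuclideanSpace ℝ (Fin n) := WithLp.toLp 2 (fun i => |g i|)
  have h := real_inner_le_norm u w
  have h1 : ⟪u, w⟫ = ∑ i : Fin n, |g i| := by
    simp [u, w, PiLp.inner_apply]
  have h2 : ‖u‖ = Real.sqrt n := by
    rw [EuclideanSpace.norm_eq]
    simp [u]
  have h3 : ‖w‖ = ‖g‖ := by
    rw [EuclideanSpace.norm_eq, EuclideanSpace.norm_eq]
    simp [w]
  rw [h1, h2, h3] at h
  exact h

lemma gradLoss_norm_le (d m n : ℕ) (σ : ℝ → ℝ) (C₁ : ℝ)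
    (hbd : ∀ t : ℝ, |deriv σ t| ≤ C₁) (a : Fin m → ℝ) (ha : ∀ r, a r = 1 ∨ a r = -1)
    (X : Fin n → EuclideanSpace ℝ (Fin d)) (hX : ∀ i, ‖X i‖ = 1)
    (y : EuclideanSpace ℝ (Fin n)) (V : Wts d m) (r : Fin m) :
    ‖gradLoss d m n σ a X y V r‖
      ≤ (Real.sqrt m)⁻¹ * C₁ * (Real.sqrt n * ‖resid d m n σ a X y V‖) := by
  have hC : 0 ≤ C₁ := le_trans (abs_nonneg _) (hbd 0)
  have har : |a r| = 1 := by rcases ha r with h | h <;> simp [h]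
  calc ‖gradLoss d m n σ a X y V r‖
      ≤ ∑ i : Fin n, ‖(resid d m n σ a X y V i
          * ((Real.sqrt m)⁻¹ * (a r * deriv σ ⟪V r, X i⟫))) • X i‖ :=
        by simp only [gradLoss]; exact norm_sum_le _ _
    _ ≤ ∑ i : Fin n, (Real.sqrt m)⁻¹ * C₁ * |resid d m n σ a X y V i| := by
        refine Finset.sum_le_sum fun i _ => ?_
        rw [norm_smul, hX i, mul_one]
        rw [Real.norm_eq_abs, abs_mul, abs_mul, abs_mul, har, one_mul,
          abs_of_nonneg (inv_nonneg.2 (Real.sqrt_nonneg _))]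
        have := hbd ⟪V r, X i⟫
        have hg : (0:ℝ) ≤ |resid d m n σ a X y V i| := abs_nonneg _
        calc |resid d m n σ a X y V i| * ((Real.sqrt m)⁻¹ * |deriv σ ⟪V r, X i⟫|)
            ≤ |resid d m n σ a X y V i| * ((Real.sqrt m)⁻¹ * C₁) := by
              apply mul_le_mul_of_nonneg_left _ hg
              exact mul_le_mul_of_nonneg_left this (inv_nonneg.2 (Real.sqrt_nonneg _))
          _ = (Real.sqrt m)⁻¹ * C₁ * |resid d m n σ a X y V i| := by ring
    _ = (Real.sqrt m)⁻¹ * C₁ * ∑ i : Fin n, |resid d m n σ a X y V i| := by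
        rw [Finset.mul_sum]
    _ ≤ (Real.sqrt m)⁻¹ * C₁ * (Real.sqrt n * ‖resid d m n σ a X y V‖) := by
        apply mul_le_mul_of_nonneg_left (l1_le_sqrt_l2 n _)
        positivity

end AuxPerNeuron

set_option synthInstance.maxHeartbeats 400000 in
set_option maxHeartbeats 2000000 in
/-- per-neuron weight movement bound (first part of Lemma A.3,
full-training case). -/
theorem per_neuron_movement
    (d m n : ℕ) (hm : 1 ≤ m) (σ : ℝ → ℝ) (hσ : ContDiff ℝ 1 σ)
    (C₁ : ℝ) (hbd : ∀ t : ℝ, |deriv σ t| ≤ C₁)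
    (a : Fin m → ℝ) (ha : ∀ r, a r = 1 ∨ a r = -1)
    (X : Fin n → EuclideanSpace ℝ (Fin d)) (hX : ∀ i, ‖X i‖ = 1)
    (y : EuclideanSpace ℝ (Fin n)) (W₀ : Wts d m)
    (η₀ R₀ c : ℝ) (hη₀ : 0 < η₀) (hR₀ : 0 < R₀) (hc : 0 < c)
    (W : ℝ → Wts d m) (hW0 : W 0 = W₀)
    (hflow : ∀ t : ℝ, HasDerivAt W (-(η₀ • gradient (loss d m n σ a X y) (W t))) t)
    (hg : ∀ t : ℝ, 0 ≤ t → ‖resid d m n σ a X y (W t)‖ ≤ R₀ * Real.exp (-(c * t))) :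
    ∀ (r : Fin m) (t : ℝ), 0 ≤ t →
      ‖W t r - W₀ r‖
        ≤ η₀ * C₁ * Real.sqrt n * R₀ / c * (1 - Real.exp (-(c * t))) * (Real.sqrt m)⁻¹ := by
  intro r t ht
  have hC : 0 ≤ C₁ := le_trans (abs_nonneg _) (hbd 0)
  set K : ℝ := η₀ * ((Real.sqrt m)⁻¹ * C₁ * (Real.sqrt n * R₀)) with hK
  have hKnn : 0 ≤ K := by positivity
  set B : ℝ → ℝ := fun s => K / c * (1 - Real.exp (-(c * s))) with hBdef
  have hB : ∀ s : ℝ, HasDerivAt B (K * Real.exp (-(c * s))) s := by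
    intro s
    have hexp : HasDerivAt (fun s : ℝ => Real.exp (-(c * s)))
        (Real.exp (-(c * s)) * (-c)) s := by
      have hinner : HasDerivAt (fun s : ℝ => -(c * s)) (-c) s := by
        simpa using ((hasDerivAt_id s).const_mul c).fun_neg
      exact hinner.exp
    have := ((hasDerivAt_const s (1:ℝ)).sub hexp).const_mul (K / c)
    refine this.congr_deriv ?_
    field_simp
    ring
  have hf' : ∀ s : ℝ, HasDerivAt (fun s => W s r - W₀ r)
      ((-(η₀ • gradient (loss d m n σ a X y) (W s))) r) s := by
    intro s
    have := ((projW d m r).hasFDerivAt).comp_hasDerivAt s (hflow s)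
    exact this.sub_const (W₀ r)
  have hbound : ∀ s ∈ Set.Ico (0:ℝ) t,
      ‖(-(η₀ • gradient (loss d m n σ a X y) (W s))) r‖ ≤ K * Real.exp (-(c * s)) := by
    intro s hs
    have hgrad : gradient (loss d m n σ a X y) (W s)
        = gradLoss d m n σ a X y (W s) :=
      (loss_hasGradientAt d m n σ hσ a X y (W s)).gradient
    have h1 : (-(η₀ • gradient (loss d m n σ a X y) (W s))) r
        = -(η₀ • gradient (loss d m n σ a X y) (W s) r) := rfl
    rw [h1, norm_neg, norm_smul, Real.norm_eq_abs, abs_of_pos hη₀, hgrad]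
    have h2 := gradLoss_norm_le d m n σ C₁ hbd a ha X hX y (W s) r
    have h3 : ‖resid d m n σ a X y (W s)‖ ≤ R₀ * Real.exp (-(c * s)) := hg s hs.1
    calc η₀ * ‖gradLoss d m n σ a X y (W s) r‖
        ≤ η₀ * ((Real.sqrt m)⁻¹ * C₁ * (Real.sqrt n * ‖resid d m n σ a X y (W s)‖)) := by
          exact mul_le_mul_of_nonneg_left h2 hη₀.le
      _ ≤ η₀ * ((Real.sqrt m)⁻¹ * C₁ * (Real.sqrt n * (R₀ * Real.exp (-(c * s))))) := by
          apply mul_le_mul_of_nonneg_left _ hη₀.le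
          apply mul_le_mul_of_nonneg_left _ (by positivity)
          exact mul_le_mul_of_nonneg_left h3 (Real.sqrt_nonneg _)
      _ = K * Real.exp (-(c * s)) := by rw [hK]; ring
  have hmain := image_norm_le_of_norm_deriv_right_le_deriv_boundary
    (f := fun s => W s r - W₀ r)
    (f' := fun s => (-(η₀ • gradient (loss d m n σ a X y) (W s))) r)
    (a := 0) (b := t)
    (fun s _ => (hf' s).continuousAt.continuousWithinAt)
    (fun s _ => (hf' s).hasDerivWithinAt)
    (B := B) (B' := fun s => K * Real.exp (-(c * s)))
    (by simp [hW0, hBdef]) hB hbound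
  have hfin := hmain (Set.right_mem_Icc.2 ht)
  have hBt : B t = η₀ * C₁ * Real.sqrt n * R₀ / c * (1 - Real.exp (-(c * t))) * (Real.sqrt m)⁻¹ := by
    rw [hBdef, hK]; ring
  rw [hBt] at hfin
  exact hfin
end
end

section
/- Jacobian-difference bound under per-neuron movement (second part of Lemma A.3): Assume σ is k-times continuously differentiable with σ^{(k)} L-Lipschitz, and ‖x_i‖ = 1 for all i. Let B > 0 and let W ∈ (ℝ^d)^m satisfy max_{r ∈ {1,…,m}} ‖w_r − w_{r,0}‖ ≤ B m^{−1/2}. Then ‖J(W) − J^{(k)}(W)‖_F ≤ (L √n / k!) · B^k · m^{−k/2}. -/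
open scoped BigOperators RealInnerProductSpace
noncomputable section

/-HELPERS-/

/-- Bound on an interval integral of a function dominated by `C * |u - t| ^ q`. -/
lemma int_bound (C : ℝ) (hC : 0 ≤ C) (q : ℕ) (f : ℝ → ℝ) (hf : Continuous f)
    (t s : ℝ) (hb : ∀ u : ℝ, |f u| ≤ C * |u - t| ^ q) :
    |∫ u in t..s, f u| ≤ C * |s - t| ^ (q + 1) / (q + 1) := by
  have hint : ∀ a b : ℝ, IntervalIntegrable f MeasureTheory.volume a b :=
    fun a b => hf.intervalIntegrable a b
  rcases le_total t s with h | h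
  · have h1 : |∫ u in t..s, f u| ≤ ∫ u in t..s, |f u| := by
      simpa [Real.norm_eq_abs] using intervalIntegral.norm_integral_le_integral_norm (f := f) h
    have h2 : (∫ u in t..s, |f u|) ≤ ∫ u in t..s, C * (u - t) ^ q := by
      apply intervalIntegral.integral_mono_on h (hf.abs.intervalIntegrable _ _)
        ((by fun_prop : Continuous fun u : ℝ => C * (u - t) ^ q).intervalIntegrable _ _)
      intro u hu
      have : |u - t| = u - t := abs_of_nonneg (by linarith [hu.1])
      calc |f u| ≤ C * |u - t| ^ q := hb u
        _ = C * (u - t) ^ q := by rw [this]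
    have h3 : (∫ u in t..s, C * (u - t) ^ q) = C * ((s - t) ^ (q + 1) / (q + 1)) := by
      rw [intervalIntegral.integral_const_mul]
      have := intervalIntegral.integral_comp_sub_right (fun u => u ^ q) t (a := t) (b := s)
      rw [this, sub_self, integral_pow]
      ring
    have habs : |s - t| = s - t := abs_of_nonneg (by linarith)
    calc |∫ u in t..s, f u| ≤ ∫ u in t..s, |f u| := h1
      _ ≤ C * ((s - t) ^ (q + 1) / (q + 1)) := by rw [← h3]; exact h2
      _ = C * |s - t| ^ (q + 1) / (q + 1) := by rw [habs]; ring
  · have hsymm : |∫ u in t..s, f u| = |∫ u in s..t, f u| := by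
      rw [intervalIntegral.integral_symm]; exact (abs_neg _)
    have h1 : |∫ u in s..t, f u| ≤ ∫ u in s..t, |f u| := by
      simpa [Real.norm_eq_abs] using intervalIntegral.norm_integral_le_integral_norm (f := f) h
    have h2 : (∫ u in s..t, |f u|) ≤ ∫ u in s..t, C * (t - u) ^ q := by
      apply intervalIntegral.integral_mono_on h (hf.abs.intervalIntegrable _ _)
        ((by fun_prop : Continuous fun u : ℝ => C * (t - u) ^ q).intervalIntegrable _ _)
      intro u hu
      have : |u - t| = t - u := by rw [abs_sub_comm]; exact abs_of_nonneg (by linarith [hu.2])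
      calc |f u| ≤ C * |u - t| ^ q := hb u
        _ = C * (t - u) ^ q := by rw [this]
    have h3 : (∫ u in s..t, C * (t - u) ^ q) = C * ((t - s) ^ (q + 1) / (q + 1)) := by
      rw [intervalIntegral.integral_const_mul]
      have := intervalIntegral.integral_comp_sub_left (fun u => u ^ q) t (a := s) (b := t)
      rw [this, sub_self, integral_pow]
      ring
    have habs : |s - t| = t - s := by rw [abs_sub_comm]; exact abs_of_nonneg (by linarith)
    calc |∫ u in t..s, f u| = |∫ u in s..t, f u| := hsymm
      _ ≤ ∫ u in s..t, |f u| := h1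
      _ ≤ C * ((t - s) ^ (q + 1) / (q + 1)) := by rw [← h3]; exact h2
      _ = C * |s - t| ^ (q + 1) / (q + 1) := by rw [habs]; ring

lemma taylor_lip (L : ℝ) (hL : 0 ≤ L) :
    ∀ (p : ℕ) (g : ℝ → ℝ), ContDiff ℝ p g →
      (∀ s t : ℝ, |iteratedDeriv p g s - iteratedDeriv p g t| ≤ L * |s - t|) →
      ∀ s t : ℝ,
        |g s - ∑ j ∈ Finset.range (p + 1),
            iteratedDeriv j g t * (s - t) ^ j / (j.factorial : ℝ)|
          ≤ L * |s - t| ^ (p + 1) / ((p + 1).factorial : ℝ) := by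
  intro p
  induction p with
  | zero =>
      intro g _ hlip s t
      simpa using hlip s t
  | succ p ih =>
      intro g hg hlip s t
      have hg1 : ContDiff ℝ ((p : ℕ∞) + 1) g := by exact_mod_cast hg
      have hd : Differentiable ℝ g := (contDiff_succ_iff_deriv.mp hg1).1
      have hg' : ContDiff ℝ p (deriv g) := (contDiff_succ_iff_deriv.mp hg1).2.2
      have hiter : ∀ j : ℕ, iteratedDeriv j (deriv g) = iteratedDeriv (j + 1) g :=
        fun j => (iteratedDeriv_succ' (n := j) (f := g)).symm
      have hlip' : ∀ s t : ℝ,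
          |iteratedDeriv p (deriv g) s - iteratedDeriv p (deriv g) t| ≤ L * |s - t| := by
        intro s t; rw [hiter]; exact hlip s t
      have IH := ih (deriv g) hg' hlip'
      -- the Taylor polynomial of g of order p+1 at t
      set S : ℝ → ℝ := fun u => ∑ j ∈ Finset.range (p + 2),
        iteratedDeriv j g t * (u - t) ^ j / (j.factorial : ℝ) with hSdef
      set P : ℝ → ℝ := fun u => ∑ j ∈ Finset.range (p + 1),
        iteratedDeriv j (deriv g) t * (u - t) ^ j / (j.factorial : ℝ) with hPdef
      have hS : ∀ u : ℝ, HasDerivAt S (P u) u := by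
        intro u
        have hterm : ∀ j ∈ Finset.range (p + 2),
            HasDerivAt (fun u : ℝ => iteratedDeriv j g t * (u - t) ^ j / (j.factorial : ℝ))
              (iteratedDeriv j g t * ((j : ℝ) * (u - t) ^ (j - 1)) / (j.factorial : ℝ)) u := by
          intro j _
          exact ((((hasDerivAt_id u).sub_const t).pow j).const_mul
            (iteratedDeriv j g t)).div_const _ |>.congr_deriv (by simp only [id_eq]; ring)
        have hsum := HasDerivAt.fun_sum hterm
        have hre : (∑ j ∈ Finset.range (p + 2),
            iteratedDeriv j g t * ((j : ℝ) * (u - t) ^ (j - 1)) / (j.factorial : ℝ)) = P u := by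
          rw [Finset.sum_range_succ']
          simp only [Nat.cast_zero, zero_mul, mul_zero, zero_div, add_zero]
          refine Finset.sum_congr rfl fun j _ => ?_
          rw [← hiter j, Nat.factorial_succ]
          have h1 : ((j + 1 : ℕ) : ℝ) ≠ 0 := by positivity
          have h2 : ((j.factorial : ℕ) : ℝ) ≠ 0 := by positivity
          simp only [Nat.add_sub_cancel]
          push_cast
          field_simp
        rw [hre] at hsum
        exact hsum
      have hSt : S t = g t := by
        rw [hSdef]
        simp only
        rw [Finset.sum_range_succ']
        simp
      -- h := g - S, h' := deriv g - P
      have hh : ∀ u : ℝ, HasDerivAt (fun u => g u - S u) (deriv g u - P u) u :=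
        fun u => ((hd u).hasDerivAt).sub (hS u)
      have hcont : Continuous (fun u => deriv g u - P u) := by
        apply hg'.continuous.sub
        apply continuous_finset_sum
        intro j _
        fun_prop
      have hbd : ∀ u : ℝ, |deriv g u - P u| ≤ L / ((p + 1).factorial : ℝ) * |u - t| ^ (p + 1) := by
        intro u
        have h := IH u t
        have hPu : P u = ∑ j ∈ Finset.range (p + 1),
            iteratedDeriv j (deriv g) t * (u - t) ^ j / (j.factorial : ℝ) := rfl
        rw [hPu]
        calc |deriv g u - ∑ j ∈ Finset.range (p + 1),
              iteratedDeriv j (deriv g) t * (u - t) ^ j / (j.factorial : ℝ)|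
            ≤ L * |u - t| ^ (p + 1) / ((p + 1).factorial : ℝ) := h
          _ = L / ((p + 1).factorial : ℝ) * |u - t| ^ (p + 1) := by ring
      have hFTC : (∫ u in t..s, (deriv g u - P u)) = (g s - S s) - (g t - S t) := by
        apply intervalIntegral.integral_eq_sub_of_hasDerivAt (fun u _ => hh u)
        exact hcont.intervalIntegrable _ _
      have hLf : (0:ℝ) ≤ L / ((p + 1).factorial : ℝ) := by positivity
      have hmain := int_bound (L / ((p + 1).factorial : ℝ)) hLf (p + 1) _ hcont t s hbd
      rw [hFTC, hSt, sub_self, sub_zero] at hmain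
      have hfin : L / ((p + 1).factorial : ℝ) * |s - t| ^ (p + 1 + 1) / ((p:ℝ) + 1 + 1)
          = L * |s - t| ^ (p + 2) / ((p + 2).factorial : ℝ) := by
        have h2 : ((p + 1).factorial : ℝ) ≠ 0 := by positivity
        have h3 : ((p : ℝ) + 1 + 1) ≠ 0 := by positivity
        rw [Nat.factorial_succ (p+1)]
        push_cast
        field_simp
      calc |g s - S s| ≤ L / ((p + 1).factorial : ℝ) * |s - t| ^ (p + 1 + 1) / ((p:ℝ) + 1 + 1) := by
            simpa using hmain
        _ = L * |s - t| ^ (p + 2) / ((p + 2).factorial : ℝ) := hfin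
        _ = L * |s - t| ^ (p + 1 + 1) / ((p + 1 + 1).factorial : ℝ) := by norm_num


set_option maxHeartbeats 1600000 in
set_option synthInstance.maxHeartbeats 400000 in
/-- Jacobian-difference bound under a per-neuron movement bound (second
part of Lemma A.3). -/
theorem jacobian_difference_per_neuron
    (d m n k : ℕ) (hm : 1 ≤ m) (hk : 1 ≤ k) (σ : ℝ → ℝ) (hσ : ContDiff ℝ k σ)
    (L : ℝ) (hlip : ∀ s t : ℝ, |iteratedDeriv k σ s - iteratedDeriv k σ t| ≤ L * |s - t|)
    (a : Fin m → ℝ) (ha : ∀ r, a r = 1 ∨ a r = -1)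
    (W₀ : Wts d m) (X : Fin n → EuclideanSpace ℝ (Fin d)) (hX : ∀ i, ‖X i‖ = 1)
    (B : ℝ) (hB : 0 < B) (W : Wts d m)
    (hmove : ∀ r : Fin m, ‖W r - W₀ r‖ ≤ B * (Real.sqrt m)⁻¹) :
    Real.sqrt (∑ i, ‖Jrow d m n σ a X W i - JrowT d m n k σ a W₀ X W i‖ ^ 2)
      ≤ L * Real.sqrt n / (k.factorial : ℝ) * B ^ k * (m : ℝ) ^ (-(k : ℝ) / 2) := by
  obtain ⟨p, rfl⟩ : ∃ p, k = p + 1 := ⟨k - 1, (Nat.succ_pred_eq_of_pos hk).symm⟩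
  have hL : 0 ≤ L := by
    have h := hlip 1 0
    have h0 : (0:ℝ) ≤ |iteratedDeriv (p+1) σ 1 - iteratedDeriv (p+1) σ 0| := abs_nonneg _
    simpa using le_trans h0 h
  have hmR : (0:ℝ) < m := by exact_mod_cast hm
  have hsq : (0:ℝ) < Real.sqrt m := Real.sqrt_pos.mpr hmR
  set c : ℝ := (Real.sqrt m)⁻¹ with hc
  have hcpos : 0 < c := inv_pos.mpr hsq
  set ε : ℝ := L * (B * c) ^ (p+1) / (((p+1).factorial : ℕ) : ℝ) with heps
  have hεnn : 0 ≤ ε := by positivity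
  have hσe : ContDiff ℝ ((p : ℕ∞) + 1) σ := by exact_mod_cast hσ
  have hσd : Differentiable ℝ σ := (contDiff_succ_iff_deriv.mp hσe).1
  have hgC : ContDiff ℝ p (deriv σ) := (contDiff_succ_iff_deriv.mp hσe).2.2
  have hglip : ∀ s t : ℝ,
      |iteratedDeriv p (deriv σ) s - iteratedDeriv p (deriv σ) t| ≤ L * |s - t| := by
    intro s t
    rw [← iteratedDeriv_succ' (n := p) (f := σ)]
    exact hlip s t
  have hT := taylor_lip L hL p (deriv σ) hgC hglip
  have key : ∀ i, ‖Jrow d m n σ a X W i - JrowT d m n (p+1) σ a W₀ X W i‖ ≤ ε := by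
    intro i
    set x : EuclideanSpace ℝ (Fin d) := X i with hx
    set ψ : Fin m → (Wts d m →L[ℝ] ℝ) :=
      fun r => (innerSL ℝ x).comp (PiLp.proj 2 (fun _ : Fin m => EuclideanSpace ℝ (Fin d)) r)
      with hψdef
    have hψ : ∀ (r : Fin m) (V : Wts d m), ψ r V = ⟪V r, x⟫ := by
      intro r V
      simp only [hψdef, ContinuousLinearMap.comp_apply, PiLp.proj_apply, innerSL_apply_apply]
      exact real_inner_comm _ _
    have hb : ∀ r : Fin m, HasFDerivAt (fun V : Wts d m => (⟪V r, x⟫ : ℝ)) (ψ r) W := by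
      intro r
      have heq : (fun V : Wts d m => (⟪V r, x⟫ : ℝ)) = ψ r := by
        funext V; rw [hψ]
      rw [heq]
      exact (ψ r).hasFDerivAt
    -- derivative of the network
    have hnet : HasFDerivAt (fun V : Wts d m => net d m σ a V x)
        (c • ∑ r : Fin m, (a r * deriv σ ⟪W r, x⟫) • ψ r) W := by
      have hterm : ∀ r ∈ Finset.univ, HasFDerivAt (fun V : Wts d m => a r * σ ⟪V r, x⟫)
          ((a r * deriv σ ⟪W r, x⟫) • ψ r) W := by
        intro r _
        have h1 := ((hσd ⟪W r, x⟫).hasDerivAt).comp_hasFDerivAt W (hb r)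
        have h2 := h1.const_mul (a r)
        simpa [Function.comp, smul_smul] using h2
      have hsum := (HasFDerivAt.fun_sum hterm).const_mul c
      have heq : (fun V : Wts d m => net d m σ a V x)
          = fun V : Wts d m => c * ∑ r : Fin m, a r * σ ⟪V r, x⟫ := by
        funext V; rw [net, hc]
      rw [heq]
      exact hsum
    -- data of the Taylor model
    set b : Fin m → ℝ := fun r => ⟪W₀ r, x⟫ with hbdef
    set δ : Fin m → ℝ := fun r => ⟪W r - W₀ r, x⟫ with hδdef
    have hδ : ∀ r, δ r = ⟪W r, x⟫ - b r := by
      intro r; rw [hδdef, hbdef]; simp [inner_sub_left]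
    set Sder : Fin m → ℝ := fun r => ∑ j ∈ Finset.range (p+2),
        iteratedDeriv j σ (b r) / ((j.factorial : ℕ) : ℝ) * ((j : ℝ) * δ r ^ (j-1)) with hSderdef
    -- derivative of the Taylorized network
    have htay : HasFDerivAt (fun V : Wts d m => netT d m (p+1) σ a W₀ V x)
        (c • ∑ r : Fin m, (a r * Sder r) • ψ r) W := by
      have htayterm : ∀ (r : Fin m), ∀ j ∈ Finset.range (p+2), HasFDerivAt
          (fun V : Wts d m =>
            iteratedDeriv j σ (b r) / ((j.factorial : ℕ) : ℝ) * ⟪V r - W₀ r, x⟫ ^ j)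
          ((iteratedDeriv j σ (b r) / ((j.factorial : ℕ) : ℝ) * ((j : ℝ) * δ r ^ (j-1))) • ψ r)
          W := by
        intro r j _
        have hscal : HasDerivAt
            (fun u : ℝ => iteratedDeriv j σ (b r) / ((j.factorial : ℕ) : ℝ) * (u - b r) ^ j)
            (iteratedDeriv j σ (b r) / ((j.factorial : ℕ) : ℝ)
              * ((j : ℝ) * ((⟪W r, x⟫ : ℝ) - b r) ^ (j-1))) ⟪W r, x⟫ := by
          have h0 := (((hasDerivAt_id ((⟪W r, x⟫ : ℝ))).sub_const (b r)).pow j).const_mul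
            (iteratedDeriv j σ (b r) / ((j.factorial : ℕ) : ℝ))
          exact h0.congr_deriv (by simp only [id_eq]; ring)
        have hcomp := hscal.comp_hasFDerivAt W (hb r)
        have heq : ((fun u : ℝ => iteratedDeriv j σ (b r) / ((j.factorial : ℕ) : ℝ)
              * (u - b r) ^ j) ∘ (fun V : Wts d m => (⟪V r, x⟫ : ℝ)))
            = fun V : Wts d m =>
              iteratedDeriv j σ (b r) / ((j.factorial : ℕ) : ℝ) * ⟪V r - W₀ r, x⟫ ^ j := by
          funext V
          simp only [Function.comp, hbdef, inner_sub_left]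
        rw [heq] at hcomp
        rw [hδ r]
        exact hcomp
      have hterm : ∀ r ∈ Finset.univ, HasFDerivAt
          (fun V : Wts d m => a r * ∑ j ∈ Finset.range (p+2),
              iteratedDeriv j σ (b r) / ((j.factorial : ℕ) : ℝ) * ⟪V r - W₀ r, x⟫ ^ j)
          ((a r * Sder r) • ψ r) W := by
        intro r _
        have hs := (HasFDerivAt.fun_sum (htayterm r)).const_mul (a r)
        have hD : (a r) • ∑ j ∈ Finset.range (p+2),
            ((iteratedDeriv j σ (b r) / ((j.factorial : ℕ) : ℝ) * ((j : ℝ) * δ r ^ (j-1))) • ψ r)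
            = (a r * Sder r) • ψ r := by
          rw [← Finset.sum_smul, smul_smul, hSderdef]
        rw [hD] at hs
        exact hs
      have hsum := (HasFDerivAt.fun_sum hterm).const_mul c
      have heq : (fun V : Wts d m => netT d m (p+1) σ a W₀ V x)
          = fun V : Wts d m => c * ∑ r : Fin m, a r * ∑ j ∈ Finset.range (p+2),
              iteratedDeriv j σ (b r) / ((j.factorial : ℕ) : ℝ) * ⟪V r - W₀ r, x⟫ ^ j := by
        funext V
        rw [netT, hc, hbdef]
      rw [heq]
      exact hsum
    -- the difference of the gradients
    set e : Fin m → ℝ := fun r => deriv σ ⟪W r, x⟫ - Sder r with hedef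
    have hgrad : Jrow d m n σ a X W i - JrowT d m n (p+1) σ a W₀ X W i
        = (InnerProductSpace.toDual ℝ (Wts d m)).symm
            (c • ∑ r : Fin m, (a r * e r) • ψ r) := by
      have hD : (c • ∑ r : Fin m, (a r * deriv σ ⟪W r, x⟫) • ψ r)
            - (c • ∑ r : Fin m, (a r * Sder r) • ψ r)
          = c • ∑ r : Fin m, (a r * e r) • ψ r := by
        ext V
        simp only [ContinuousLinearMap.sub_apply, ContinuousLinearMap.smul_apply,
          ContinuousLinearMap.sum_apply, hedef, smul_eq_mul]
        rw [← mul_sub, ← Finset.sum_sub_distrib]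
        congr 1
        refine Finset.sum_congr rfl fun r _ => ?_
        ring
      rw [Jrow, JrowT, gradient, gradient, hnet.fderiv, htay.fderiv, ← map_sub, hD]
    rw [hgrad, LinearIsometryEquiv.norm_map]
    -- bound each scalar remainder
    have hδb : ∀ r, |δ r| ≤ B * c := by
      intro r
      rw [hδdef]
      calc |(⟪W r - W₀ r, x⟫ : ℝ)| ≤ ‖W r - W₀ r‖ * ‖x‖ := abs_real_inner_le_norm _ _
        _ = ‖W r - W₀ r‖ := by rw [hx, hX i, mul_one]
        _ ≤ B * (Real.sqrt m)⁻¹ := hmove r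
        _ = B * c := by rw [hc]
    have her : ∀ r, |e r| ≤ ε := by
      intro r
      have hSder : Sder r = ∑ j ∈ Finset.range (p+1),
          iteratedDeriv j (deriv σ) (b r) * δ r ^ j / ((j.factorial : ℕ) : ℝ) := by
        rw [hSderdef]
        simp only
        rw [Finset.sum_range_succ']
        simp only [Nat.cast_zero, zero_mul, mul_zero, add_zero]
        refine Finset.sum_congr rfl fun j _ => ?_
        rw [← iteratedDeriv_succ' (n := j) (f := σ), Nat.factorial_succ]
        have h1 : ((j : ℝ) + 1) ≠ 0 := by positivity
        have h2 : ((j.factorial : ℕ) : ℝ) ≠ 0 := by positivity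
        push_cast
        field_simp
      have htl := hT (⟪W r, x⟫ : ℝ) (b r)
      rw [← hδ r] at htl
      rw [hedef]
      simp only
      rw [hSder]
      calc |deriv σ ⟪W r, x⟫ - ∑ j ∈ Finset.range (p+1),
            iteratedDeriv j (deriv σ) (b r) * δ r ^ j / ((j.factorial : ℕ) : ℝ)|
          ≤ L * |δ r| ^ (p+1) / (((p+1).factorial : ℕ) : ℝ) := htl
        _ ≤ L * (B * c) ^ (p+1) / (((p+1).factorial : ℕ) : ℝ) := by
            gcongr <;> first | exact hL | exact abs_nonneg _ | exact hδb r
        _ = ε := by rw [heps]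
    -- operator norm bound
    refine ContinuousLinearMap.opNorm_le_bound _ hεnn fun V => ?_
    have hev : (c • ∑ r : Fin m, (a r * e r) • ψ r) V = c * ∑ r : Fin m, (a r * e r) * ψ r V := by
      simp [ContinuousLinearMap.sum_apply, Finset.mul_sum]
    rw [hev]
    have hstep : ∀ r : Fin m, |(a r * e r) * ψ r V| ≤ ε * ‖V r‖ := by
      intro r
      have har : |a r| = 1 := by rcases ha r with h | h <;> simp [h]
      have hψV : |ψ r V| ≤ ‖V r‖ := by
        rw [hψ]
        calc |(⟪V r, x⟫ : ℝ)| ≤ ‖V r‖ * ‖x‖ := abs_real_inner_le_norm _ _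
          _ = ‖V r‖ := by rw [hx, hX i, mul_one]
      calc |(a r * e r) * ψ r V| = |a r| * |e r| * |ψ r V| := by rw [abs_mul, abs_mul]
        _ = |e r| * |ψ r V| := by rw [har, one_mul]
        _ ≤ ε * ‖V r‖ := mul_le_mul (her r) hψV (abs_nonneg _) hεnn
    have hCS : ∑ r : Fin m, ε * ‖V r‖ ≤ Real.sqrt m * ε * ‖V‖ := by
      have h1 := Real.sum_mul_le_sqrt_mul_sqrt Finset.univ (fun _ : Fin m => ε)
        (fun r => ‖V r‖)
      have h2 : Real.sqrt (∑ _r : Fin m, ε ^ 2) = Real.sqrt m * ε := by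
        rw [Finset.sum_const, Finset.card_univ, Fintype.card_fin, nsmul_eq_mul,
          Real.sqrt_mul (by positivity), Real.sqrt_sq hεnn]
      have h3 : Real.sqrt (∑ r : Fin m, ‖V r‖ ^ 2) = ‖V‖ := (PiLp.norm_eq_of_L2 V).symm
      calc ∑ r : Fin m, ε * ‖V r‖
          ≤ Real.sqrt (∑ _r : Fin m, ε ^ 2) * Real.sqrt (∑ r : Fin m, ‖V r‖ ^ 2) := h1
        _ = Real.sqrt m * ε * ‖V‖ := by rw [h2, h3]
    calc ‖c * ∑ r : Fin m, (a r * e r) * ψ r V‖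
        = c * |∑ r : Fin m, (a r * e r) * ψ r V| := by
          rw [Real.norm_eq_abs, abs_mul, abs_of_pos hcpos]
      _ ≤ c * ∑ r : Fin m, |(a r * e r) * ψ r V| :=
          mul_le_mul_of_nonneg_left (Finset.abs_sum_le_sum_abs _ _) hcpos.le
      _ ≤ c * ∑ r : Fin m, ε * ‖V r‖ :=
          mul_le_mul_of_nonneg_left (Finset.sum_le_sum fun r _ => hstep r) hcpos.le
      _ ≤ c * (Real.sqrt m * ε * ‖V‖) := mul_le_mul_of_nonneg_left hCS hcpos.le
      _ = ε * ‖V‖ := by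
          rw [hc]
          field_simp
  -- sum over the data points
  have hsum : (∑ i, ‖Jrow d m n σ a X W i - JrowT d m n (p+1) σ a W₀ X W i‖ ^ 2)
      ≤ (n : ℝ) * ε ^ 2 := by
    calc (∑ i, ‖Jrow d m n σ a X W i - JrowT d m n (p+1) σ a W₀ X W i‖ ^ 2)
        ≤ ∑ _i : Fin n, ε ^ 2 :=
          Finset.sum_le_sum fun i _ => pow_le_pow_left₀ (norm_nonneg _) (key i) 2
      _ = (n : ℝ) * ε ^ 2 := by
          rw [Finset.sum_const, Finset.card_univ, Fintype.card_fin, nsmul_eq_mul]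
  have hcpow : c ^ (p+1) = (m : ℝ) ^ (-((p+1 : ℕ) : ℝ) / 2) := by
    rw [hc, Real.sqrt_eq_rpow, ← Real.rpow_neg_one ((m:ℝ) ^ ((1:ℝ)/2)), ← Real.rpow_natCast
      (((m:ℝ) ^ ((1:ℝ)/2)) ^ (-1:ℝ)) (p+1), ← Real.rpow_mul hmR.le, ← Real.rpow_mul hmR.le]
    push_cast
    ring_nf
  calc Real.sqrt (∑ i, ‖Jrow d m n σ a X W i - JrowT d m n (p+1) σ a W₀ X W i‖ ^ 2)
      ≤ Real.sqrt ((n : ℝ) * ε ^ 2) := Real.sqrt_le_sqrt hsum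
    _ = Real.sqrt n * ε := by
        rw [Real.sqrt_mul (by positivity), Real.sqrt_sq hεnn]
    _ = L * Real.sqrt n / (((p+1).factorial : ℕ) : ℝ) * B ^ (p+1)
          * (m : ℝ) ^ (-((p+1 : ℕ) : ℝ) / 2) := by
        rw [heps, ← hcpow, mul_pow]
        ring
  done
end
end

section
/- Stability of the empirical NTK (used for the third conclusion of Lemma A.1(b)): Assume |σ'(t)| ≤ C₁ for all t, σ' is C₁-Lipschitz, and ‖x_i‖ = 1 for all i. Then for all weight matrices W, W̃ ∈ (ℝ^d)^m: ‖Θ̂(W) − Θ̂(W̃)‖_F ≤ 2 C₁² n m^{−1/2} ‖W − W̃‖_F, where Θ̂(W) = J(W) J(W)^⊤. -/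
open scoped BigOperators RealInnerProductSpace
noncomputable section

lemma hasGradientAt_net (d m : ℕ) (σ : ℝ → ℝ) (hσ : ContDiff ℝ 1 σ) (a : Fin m → ℝ)
    (x : EuclideanSpace ℝ (Fin d)) (W : Wts d m) :
    HasGradientAt (fun V => net d m σ a V x)
      (WithLp.toLp 2 (fun r => ((Real.sqrt m)⁻¹ * (a r * deriv σ ⟪W r, x⟫)) • x)) W := by
  rw [hasGradientAt_iff_hasFDerivAt]
  set φ : Fin m → (Wts d m →L[ℝ] ℝ) :=
    fun r => (innerSL ℝ x).comp (PiLp.proj 2 _ r) with hφ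
  have hφapp : ∀ r (V : Wts d m), φ r V = ⟪V r, x⟫ := by
    intro r V
    rw [hφ]
    simp only [ContinuousLinearMap.comp_apply, PiLp.proj_apply, innerSL_apply_apply]
    exact real_inner_comm (V r) x
  have hder : ∀ t : ℝ, HasDerivAt σ (deriv σ t) t := fun t =>
    ((hσ.differentiable one_ne_zero) t).hasDerivAt
  have h1 : ∀ r : Fin m, HasFDerivAt (fun V : Wts d m => a r * σ ⟪V r, x⟫)
      ((a r * deriv σ ⟪W r, x⟫) • φ r) W := by
    intro r
    have h2 : HasFDerivAt (fun V : Wts d m => σ (φ r V))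
        ((deriv σ (φ r W)) • φ r) W :=
      (hder (φ r W)).comp_hasFDerivAt W (φ r).hasFDerivAt
    simp only [hφapp] at h2 ⊢
    have := h2.const_mul (a r)
    rw [mul_smul]
    exact this
  have hsum := HasFDerivAt.fun_sum (fun r (_ : r ∈ Finset.univ) => h1 r)
  have htot := hsum.const_mul ((Real.sqrt m)⁻¹)
  have : (fun V : Wts d m => net d m σ a V x)
      = fun V => (Real.sqrt m)⁻¹ * ∑ r : Fin m, a r * σ ⟪V r, x⟫ := rfl
  rw [this]
  refine htot.congr_fderiv (Eq.symm ?_)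
  refine ContinuousLinearMap.ext fun V => ?_
  simp only [InnerProductSpace.toDual_apply_apply, ContinuousLinearMap.smul_apply,
    ContinuousLinearMap.coe_sum', Finset.sum_apply, smul_eq_mul, hφapp,
    PiLp.inner_apply, RCLike.inner_apply, conj_trivial, PiLp.smul_apply, PiLp.toLp_apply, mul_assoc]
  rw [Finset.mul_sum]
  refine Finset.sum_congr rfl fun r _ => ?_
  rw [Finset.mul_sum, Finset.mul_sum, Finset.mul_sum]
  exact Finset.sum_congr rfl fun i _ => by ring

lemma Jrow_eq (d m n : ℕ) (σ : ℝ → ℝ) (hσ : ContDiff ℝ 1 σ) (a : Fin m → ℝ)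
    (X : Fin n → EuclideanSpace ℝ (Fin d)) (W : Wts d m) (i : Fin n) :
    Jrow d m n σ a X W i
      = WithLp.toLp 2 (fun r => ((Real.sqrt m)⁻¹ * (a r * deriv σ ⟪W r, X i⟫)) • (X i)) :=
  (hasGradientAt_net d m σ hσ a (X i) W).gradient

lemma inner_Jrow (d m n : ℕ) (σ : ℝ → ℝ) (hσ : ContDiff ℝ 1 σ) (a : Fin m → ℝ)
    (ha : ∀ r, a r = 1 ∨ a r = -1)
    (X : Fin n → EuclideanSpace ℝ (Fin d)) (W : Wts d m) (i j : Fin n) :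
    ⟪Jrow d m n σ a X W i, Jrow d m n σ a X W j⟫
      = (m : ℝ)⁻¹ * ((∑ r : Fin m, deriv σ ⟪W r, X i⟫ * deriv σ ⟪W r, X j⟫)
          * ⟪X i, X j⟫) := by
  have key : ∀ (u v : EuclideanSpace ℝ (Fin d)) (b c : ℝ),
      ⟪b • u, c • v⟫ = b * c * ⟪u, v⟫ := by
    intro u v b c
    rw [real_inner_smul_left, real_inner_smul_right]; ring
  rw [Jrow_eq d m n σ hσ a X W i, Jrow_eq d m n σ hσ a X W j]
  rw [PiLp.inner_apply]
  simp only [PiLp.toLp_apply, key]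
  rw [← Finset.sum_mul, ← mul_assoc, Finset.mul_sum]
  refine congrArg (· * ⟪X i, X j⟫) ?_
  refine Finset.sum_congr rfl fun r _ => ?_
  have h1 : a r * a r = 1 := by rcases ha r with h | h <;> rw [h] <;> norm_num
  have h2 : (Real.sqrt m)⁻¹ * (Real.sqrt m)⁻¹ = (m : ℝ)⁻¹ := by
    rw [← mul_inv, Real.mul_self_sqrt (Nat.cast_nonneg m)]
  have : (Real.sqrt m)⁻¹ * (a r * deriv σ ⟪W r, X i⟫)
        * ((Real.sqrt m)⁻¹ * (a r * deriv σ ⟪W r, X j⟫))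
      = ((Real.sqrt m)⁻¹ * (Real.sqrt m)⁻¹) * (a r * a r)
        * (deriv σ ⟪W r, X i⟫ * deriv σ ⟪W r, X j⟫) := by ring
  rw [this, h1, h2]; ring

/-- stability of the empirical NTK in Frobenius norm. -/
theorem ntk_stability
    (d m n : ℕ) (hm : 1 ≤ m) (σ : ℝ → ℝ) (hσ : ContDiff ℝ 1 σ)
    (C₁ : ℝ) (hbd : ∀ t : ℝ, |deriv σ t| ≤ C₁)
    (hlip : ∀ s t : ℝ, |deriv σ s - deriv σ t| ≤ C₁ * |s - t|)
    (a : Fin m → ℝ) (ha : ∀ r, a r = 1 ∨ a r = -1)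
    (X : Fin n → EuclideanSpace ℝ (Fin d)) (hX : ∀ i, ‖X i‖ = 1)
    (W W' : Wts d m) :
    Real.sqrt (∑ i, ∑ j,
        (⟪Jrow d m n σ a X W i, Jrow d m n σ a X W j⟫ -
          ⟪Jrow d m n σ a X W' i, Jrow d m n σ a X W' j⟫) ^ 2)
      ≤ 2 * C₁ ^ 2 * n * (Real.sqrt m)⁻¹ * ‖W - W'‖ := by
  have hC : 0 ≤ C₁ := (abs_nonneg _).trans (hbd 0)
  have hm0 : (0:ℝ) < (m:ℝ) := by exact_mod_cast Nat.lt_of_lt_of_le Nat.zero_lt_one hm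
  have hsm : (0:ℝ) < Real.sqrt m := Real.sqrt_pos.2 hm0
  have hdiff : ∀ (r : Fin m) (x : EuclideanSpace ℝ (Fin d)), ‖x‖ = 1 →
      |deriv σ ⟪W r, x⟫ - deriv σ ⟪W' r, x⟫| ≤ C₁ * ‖W r - W' r‖ := by
    intro r x hx
    refine (hlip _ _).trans ?_
    rw [← inner_sub_left]
    have h := abs_real_inner_le_norm (W r - W' r) x
    rw [hx, mul_one] at h
    exact mul_le_mul_of_nonneg_left h hC
  have hnorm_sum : ∑ r : Fin m, ‖W r - W' r‖ ≤ Real.sqrt m * ‖W - W'‖ := by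
    have h2 : ‖W - W'‖ = Real.sqrt (∑ r : Fin m, ‖W r - W' r‖^2) := by
      rw [PiLp.norm_eq_of_L2]
      rfl
    have h1 : (∑ r : Fin m, ‖W r - W' r‖)^2 ≤ (m : ℝ) * ∑ r : Fin m, ‖W r - W' r‖^2 := by
      simpa using sq_sum_le_card_mul_sum_sq (s := (Finset.univ : Finset (Fin m)))
        (f := fun r => ‖W r - W' r‖)
    have h3 : (∑ r : Fin m, ‖W r - W' r‖)
        ≤ Real.sqrt ((m : ℝ) * ∑ r : Fin m, ‖W r - W' r‖^2) := by
      rw [← Real.sqrt_sq (by positivity : (0:ℝ) ≤ ∑ r : Fin m, ‖W r - W' r‖)]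
      exact Real.sqrt_le_sqrt h1
    refine h3.trans ?_
    rw [h2, ← Real.sqrt_mul (le_of_lt hm0)]
  have hper : ∀ (r : Fin m) (i j : Fin n),
      |deriv σ ⟪W r, X i⟫ * deriv σ ⟪W r, X j⟫
        - deriv σ ⟪W' r, X i⟫ * deriv σ ⟪W' r, X j⟫|
      ≤ 2 * C₁^2 * ‖W r - W' r‖ := by
    intro r i j
    set p := deriv σ ⟪W r, X i⟫ with hp
    set q := deriv σ ⟪W r, X j⟫ with hq
    set p' := deriv σ ⟪W' r, X i⟫ with hp'
    set q' := deriv σ ⟪W' r, X j⟫ with hq'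
    have h1 : p * q - p' * q' = p * (q - q') + (p - p') * q' := by ring
    calc |p * q - p' * q'| ≤ |p| * |q - q'| + |p - p'| * |q'| := by
          rw [h1]
          exact (abs_add_le _ _).trans (by rw [abs_mul, abs_mul])
      _ ≤ C₁ * (C₁ * ‖W r - W' r‖) + (C₁ * ‖W r - W' r‖) * C₁ := by
          refine add_le_add (mul_le_mul (hbd _) (hdiff r (X j) (hX j)) (abs_nonneg _) hC) ?_
          exact mul_le_mul (hdiff r (X i) (hX i)) (hbd _) (abs_nonneg _) (by positivity)
      _ = 2 * C₁^2 * ‖W r - W' r‖ := by ring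
  set B : ℝ := 2 * C₁^2 * (Real.sqrt m)⁻¹ * ‖W - W'‖ with hB
  have hB0 : 0 ≤ B := by positivity
  have hent : ∀ i j : Fin n,
      |⟪Jrow d m n σ a X W i, Jrow d m n σ a X W j⟫ -
        ⟪Jrow d m n σ a X W' i, Jrow d m n σ a X W' j⟫| ≤ B := by
    intro i j
    rw [inner_Jrow d m n σ hσ a ha X W i j, inner_Jrow d m n σ hσ a ha X W' i j]
    have e : (m : ℝ)⁻¹ * ((∑ r : Fin m, deriv σ ⟪W r, X i⟫ * deriv σ ⟪W r, X j⟫) * ⟪X i, X j⟫)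
          - (m : ℝ)⁻¹ * ((∑ r : Fin m, deriv σ ⟪W' r, X i⟫ * deriv σ ⟪W' r, X j⟫) * ⟪X i, X j⟫)
        = (m : ℝ)⁻¹ * ((∑ r : Fin m, (deriv σ ⟪W r, X i⟫ * deriv σ ⟪W r, X j⟫
            - deriv σ ⟪W' r, X i⟫ * deriv σ ⟪W' r, X j⟫)) * ⟪X i, X j⟫) := by
      rw [Finset.sum_sub_distrib]
      ring
    rw [e, abs_mul, abs_mul, abs_of_nonneg (by positivity : (0:ℝ) ≤ (m:ℝ)⁻¹)]
    have ht : |(⟪X i, X j⟫ : ℝ)| ≤ 1 := by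
      have h := abs_real_inner_le_norm (X i) (X j)
      rw [hX i, hX j, mul_one] at h
      exact h
    have hsum : |∑ r : Fin m, (deriv σ ⟪W r, X i⟫ * deriv σ ⟪W r, X j⟫
          - deriv σ ⟪W' r, X i⟫ * deriv σ ⟪W' r, X j⟫)|
        ≤ 2 * C₁^2 * (Real.sqrt m * ‖W - W'‖) := by
      refine (Finset.abs_sum_le_sum_abs _ _).trans ?_
      refine le_trans (Finset.sum_le_sum fun r _ => hper r i j) ?_
      rw [← Finset.mul_sum]
      exact mul_le_mul_of_nonneg_left hnorm_sum (by positivity)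
    calc (m:ℝ)⁻¹ * (|∑ r : Fin m, (deriv σ ⟪W r, X i⟫ * deriv σ ⟪W r, X j⟫
            - deriv σ ⟪W' r, X i⟫ * deriv σ ⟪W' r, X j⟫)| * |(⟪X i, X j⟫ : ℝ)|)
        ≤ (m:ℝ)⁻¹ * (2 * C₁^2 * (Real.sqrt m * ‖W - W'‖) * 1) := by
          refine mul_le_mul_of_nonneg_left ?_ (by positivity)
          exact mul_le_mul hsum ht (abs_nonneg _) (by positivity)
      _ = B := by
          rw [hB, show (m:ℝ) = Real.sqrt m * Real.sqrt m from
            (Real.mul_self_sqrt (Nat.cast_nonneg m)).symm]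
          field_simp
          rw [Real.sqrt_sq hsm.le, Real.sq_sqrt hm0.le]
          ring
  have hfin : (∑ i, ∑ j,
      (⟪Jrow d m n σ a X W i, Jrow d m n σ a X W j⟫ -
        ⟪Jrow d m n σ a X W' i, Jrow d m n σ a X W' j⟫) ^ 2)
      ≤ ((n:ℝ) * B)^2 := by
    have step : ∀ i j : Fin n,
        (⟪Jrow d m n σ a X W i, Jrow d m n σ a X W j⟫ -
          ⟪Jrow d m n σ a X W' i, Jrow d m n σ a X W' j⟫) ^ 2 ≤ B^2 := by
      intro i j
      have h := abs_le.1 (hent i j)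
      exact sq_le_sq' (by linarith [h.1]) h.2
    calc (∑ i, ∑ j, (⟪Jrow d m n σ a X W i, Jrow d m n σ a X W j⟫ -
          ⟪Jrow d m n σ a X W' i, Jrow d m n σ a X W' j⟫) ^ 2)
        ≤ ∑ _i : Fin n, ∑ _j : Fin n, B^2 :=
          Finset.sum_le_sum fun i _ => Finset.sum_le_sum fun j _ => step i j
      _ = ((n:ℝ) * B)^2 := by
          simp [Finset.sum_const, Finset.card_univ]
          ring
  refine (Real.sqrt_le_sqrt hfin).trans ?_
  rw [Real.sqrt_sq (by positivity)]
  exact le_of_eq (by rw [hB]; ring)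
end
end
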